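/- Let A be a positive diagonal n×n matrix with distinct diagonal entries. Then the linear span of the super left-commutant ⟨A] = {B : B ≥ 0 entrywise, AB ≥ BA entrywise} has dimension exactly n(n+1)/2. -/

import Mathlib

open Matrix Finset

theorem stmt_10 (n : ℕ) (a : Fin n → ℝ) (hpos : ∀ i, 0 ≤ a i)
    (hdist : Function.Injective a) :
    Module.finrank ℝ (Submodule.span ℝ
      {B : Matrix (Fin n) (Fin n) ℝ | (∀ i j, 0 ≤ B i j) ∧
        ∀ i j, (B * Matrix.diagonal a) i j ≤ (Matrix.diagonal a * B) i j}) =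
      n * (n + 1) / 2 := by
  classical
  set v : Fin n × Fin n → Matrix (Fin n) (Fin n) ℝ :=
    fun p => Matrix.single p.1 p.2 (1 : ℝ) with hv
  set s : Set (Fin n × Fin n) := {p | a p.2 ≤ a p.1} with hs
  set S : Set (Matrix (Fin n) (Fin n) ℝ) :=
    {B | (∀ i j, 0 ≤ B i j) ∧
      ∀ i j, (B * Matrix.diagonal a) i j ≤ (Matrix.diagonal a * B) i j} with hS
  -- each v p for p ∈ s belongs to S
  have hvS : ∀ p ∈ s, v p ∈ S := by
    rintro ⟨i, j⟩ hp
    constructor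
    · intro i' j'
      simp only [hv, Matrix.single, Matrix.of_apply]
      positivity
    · intro i' j'
      rw [Matrix.mul_diagonal, Matrix.diagonal_mul]
      simp only [hv, Matrix.single, Matrix.of_apply]
      by_cases h : i = i' ∧ j = j'
      · obtain ⟨rfl, rfl⟩ := h
        simpa [hs] using hp
      · simp [h]
  -- span equality
  have hspan : Submodule.span ℝ S = Submodule.span ℝ (Set.range fun p : s => v p) := by
    apply le_antisymm
    · rw [Submodule.span_le]
      intro B hB
      obtain ⟨hB1, hB2⟩ := hB
      -- off-s entries vanish
      have hzero : ∀ i j, (i, j) ∉ s → B i j = 0 := by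
        intro i j hij
        simp only [hs, Set.mem_setOf_eq, not_le] at hij
        have h1 := hB1 i j
        have h2 := hB2 i j
        rw [Matrix.mul_diagonal, Matrix.diagonal_mul] at h2
        nlinarith
      have hrep : B = ∑ i : Fin n, ∑ j : Fin n, B i j • v (i, j) := by
        conv_lhs => rw [Matrix.matrix_eq_sum_single B]
        refine Finset.sum_congr rfl fun i _ => Finset.sum_congr rfl fun j _ => ?_
        rw [hv, Matrix.smul_single, smul_eq_mul, mul_one]
      rw [hrep]
      apply Submodule.sum_mem; intro i _
      apply Submodule.sum_mem; intro j _
      by_cases hij : (i, j) ∈ s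
      · exact Submodule.smul_mem _ _ (Submodule.subset_span ⟨⟨(i, j), hij⟩, rfl⟩)
      · rw [hzero i j hij, zero_smul]; exact Submodule.zero_mem _
    · rw [Submodule.span_le]
      rintro _ ⟨⟨p, hp⟩, rfl⟩
      exact Submodule.subset_span (hvS p hp)
  rw [hspan]
  -- linear independence
  have hli : LinearIndependent ℝ fun p : s => v p := by
    have hbasis : v = ⇑(Matrix.stdBasis ℝ (Fin n) (Fin n)) := by
      funext p
      rw [hv]
      exact (Matrix.stdBasis_eq_single ℝ p.1 p.2).symm
    rw [hbasis]
    exact (Matrix.stdBasis ℝ (Fin n) (Fin n)).linearIndependent.comp _ Subtype.val_injective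
  rw [finrank_span_eq_card hli]
  -- cardinality count
  have hcard : Fintype.card s = (Finset.univ.filter
      (fun p : Fin n × Fin n => a p.2 ≤ a p.1)).card := by
    rw [← Set.toFinset_card]
    congr 1
    ext p
    simp [hs]
  rw [hcard]
  set P := Finset.univ.filter (fun p : Fin n × Fin n => a p.2 ≤ a p.1) with hP
  set Q := Finset.univ.filter (fun p : Fin n × Fin n => a p.1 ≤ a p.2) with hQ
  have hPQ : P.card = Q.card := by
    apply Finset.card_bij (fun p _ => Prod.swap p)
    · rintro ⟨i, j⟩ hp
      simp only [hP, Finset.mem_filter] at hp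
      simp [hQ, hp.2]
    · rintro ⟨i, j⟩ _ ⟨i', j'⟩ _ h
      simpa [Prod.ext_iff, and_comm] using h
    · rintro ⟨i, j⟩ hq
      simp only [hQ, Finset.mem_filter] at hq
      exact ⟨(j, i), by simp [hP, hq.2], rfl⟩
  have hunion : P ∪ Q = Finset.univ := by
    ext ⟨i, j⟩
    simp only [hP, hQ, Finset.mem_union, Finset.mem_filter, Finset.mem_univ, true_and]
    exact iff_of_true (le_total (a j) (a i)) trivial
  have hinter : P ∩ Q = Finset.univ.filter (fun p : Fin n × Fin n => p.1 = p.2) := by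
    ext ⟨i, j⟩
    simp only [hP, hQ, Finset.mem_inter, Finset.mem_filter, Finset.mem_univ, true_and]
    constructor
    · rintro ⟨h1, h2⟩
      exact hdist (le_antisymm h2 h1)
    · rintro rfl
      exact ⟨le_rfl, le_rfl⟩
  have hdiag : (Finset.univ.filter (fun p : Fin n × Fin n => p.1 = p.2)).card = n := by
    have : Finset.univ.filter (fun p : Fin n × Fin n => p.1 = p.2)
        = Finset.univ.image (fun i : Fin n => (i, i)) := by
      ext ⟨i, j⟩
      simp only [Finset.mem_filter, Finset.mem_univ, true_and, Finset.mem_image,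
        Prod.mk.injEq]
      constructor
      · rintro rfl; exact ⟨i, rfl, rfl⟩
      · rintro ⟨k, rfl, rfl⟩; rfl
    rw [this, Finset.card_image_of_injective _ (fun i j h => (Prod.ext_iff.mp h).1),
      Finset.card_univ, Fintype.card_fin]
  have hsum : P.card + Q.card = n * n + n := by
    have := Finset.card_union_add_card_inter P Q
    rw [hunion, hinter, hdiag, Finset.card_univ] at this
    simpa [Fintype.card_prod, Fintype.card_fin] using this.symm
  have hmul : n * n + n = n * (n + 1) := by ring
  omega
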